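/- Let X be a complete locally compact length space that is homeomorphic to a product M × ℝ for some topological space M. Then X has the loops-to-infinity property, and consequently π₁^{cut}(X,δ,R,x) = π₁(X,x) and CovSpec^R_cut(X,x) = ∅ for every basepoint x ∈ X and all δ > 0, R > 0. -/

import Mathlib

/- Common definitions: path length, length/geodesic spaces, δ-covering groups,
   covering spectra, cut-off covering groups and spectra, free homotopy,
   loops-to-infinity. -/

open Metric Filter
open scoped NNReal ENNReal unitInterval

attribute [local instance] Path.Homotopic.setoid

/-- The length (total variation) of a path in a metric space. -/
noncomputable def pathLength {X : Type*} [MetricSpace X] {x y : X} (γ : Path x y) : ℝ≥0∞ :=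
  eVariationOn γ Set.univ

/-- A metric space is a length space if the distance between any two points is the
infimum of the lengths of paths joining them. -/
def IsLengthSpace (X : Type*) [MetricSpace X] : Prop :=
  ∀ x y : X, ENNReal.ofReal (dist x y) = ⨅ γ : Path x y, pathLength γ

/-- A metric space is a geodesic space if any two points are joined by a
distance-realizing path. -/
def IsGeodesicSpace (X : Type*) [MetricSpace X] : Prop :=
  ∀ x y : X, ∃ γ : Path x y, pathLength γ = ENNReal.ofReal (dist x y)

/-- The element of the fundamental group at `p` represented by the loop
`α⁻¹ · β · α` (i.e. follow `α` from `p` to `y`, the loop `β` at `y`, then `α` back). -/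
noncomputable def loopClass {X : Type*} [TopologicalSpace X] {p y : X}
    (α : Path p y) (β : Path y y) : FundamentalGroup X p :=
  FundamentalGroup.fromPath (X := TopCat.of X) ⟦(α.trans β).trans α.symm⟧

/-- The δ-covering group `π₁(X, δ, p)`: the normal subgroup of `π₁(X,p)` generated by
classes of loops `α⁻¹·β·α` with `β` lying in some open ball of radius `δ`. -/
noncomputable def coveringGroup (X : Type*) [MetricSpace X] (p : X) (δ : ℝ) :
    Subgroup (FundamentalGroup X p) :=
  Subgroup.normalClosure
    {g | ∃ (y : X) (β : Path y y) (α : Path p y),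
      (∃ c : X, ∀ t, β t ∈ Metric.ball c δ) ∧ g = loopClass α β}

/-- The covering spectrum of `X` (with basepoint `p`). -/
def covSpec (X : Type*) [MetricSpace X] (p : X) : Set ℝ :=
  {δ | 0 < δ ∧ ∀ δ' > δ, coveringGroup X p δ' ≠ coveringGroup X p δ}

/-- The `R` cut-off δ-covering group `π₁^{cut}(X, δ, R, x)`: the normal subgroup of
`π₁(X,x)` generated by classes of loops `α⁻¹·β·α` with `β` lying in some open ball of
radius `δ` or in the complement of the closed ball `B̄(x,R)`. -/
noncomputable def cutCoveringGroup (X : Type*) [MetricSpace X] (x : X) (δ R : ℝ) :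
    Subgroup (FundamentalGroup X x) :=
  Subgroup.normalClosure
    {g | ∃ (y : X) (β : Path y y) (α : Path x y),
      ((∃ c : X, ∀ t, β t ∈ Metric.ball c δ) ∨ (∀ t, β t ∉ Metric.closedBall x R)) ∧
      g = loopClass α β}

/-- The `R` cut-off covering spectrum of `(X,x)`. -/
def cutCovSpec (X : Type*) [MetricSpace X] (x : X) (R : ℝ) : Set ℝ :=
  {δ | 0 < δ ∧ ∀ δ' > δ, cutCoveringGroup X x δ' R ≠ cutCoveringGroup X x δ R}

/-- Two loops are freely homotopic: there is a homotopy through (not necessarily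
based) loops from one to the other. -/
def FreelyHomotopic {X : Type*} [TopologicalSpace X] {a b : X}
    (γ₀ : Path a a) (γ₁ : Path b b) : Prop :=
  ∃ H : C(I × I, X),
    (∀ t, H (0, t) = γ₀ t) ∧ (∀ t, H (1, t) = γ₁ t) ∧ ∀ s, H (s, 0) = H (s, 1)

/-- Two loops are freely homotopic within a subset `A`: the homotopy stays in `A`. -/
def FreelyHomotopicIn {X : Type*} [TopologicalSpace X] (A : Set X) {a b : X}
    (γ₀ : Path a a) (γ₁ : Path b b) : Prop :=
  ∃ H : C(I × I, X),
    (∀ t, H (0, t) = γ₀ t) ∧ (∀ t, H (1, t) = γ₁ t) ∧ (∀ s, H (s, 0) = H (s, 1)) ∧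
    ∀ p, H p ∈ A

/-- A loop has the loops-to-infinity property: for every compact set it is freely
homotopic to a loop outside that set. -/
def LoopToInfinity {X : Type*} [TopologicalSpace X] {a : X} (γ : Path a a) : Prop :=
  ∀ K : Set X, IsCompact K →
    ∃ (b : X) (η : Path b b), (∀ t, η t ∉ K) ∧ FreelyHomotopic γ η

/-- A space has the loops-to-infinity property if all of its loops do. -/
def LoopsToInfinity (X : Type*) [TopologicalSpace X] : Prop :=
  ∀ (a : X) (γ : Path a a), LoopToInfinity γ

/-- Concatenation of a finite list of loops based at `q`. -/
noncomputable def loopConcat {X : Type*} [TopologicalSpace X] (q : X) :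
    List (Path q q) → Path q q
  | [] => Path.refl q
  | γ :: rest => γ.trans (loopConcat q rest)

/-- A space is semilocally simply connected if every point has a neighborhood in which
every loop is null-homotopic in the whole space. -/
def SemilocallySimplyConnected (X : Type*) [TopologicalSpace X] : Prop :=
  ∀ x : X, ∃ U ∈ nhds x, ∀ (y : X) (γ : Path y y), (∀ t, γ t ∈ U) →
    γ.Homotopic (Path.refl y)

/-- A pointed ε-Hausdorff approximation. -/
def IsPointedHausdorffApprox {Z₁ Z₂ : Type*} [MetricSpace Z₁] [MetricSpace Z₂]
    (f : Z₁ → Z₂) (p₁ : Z₁) (p₂ : Z₂) (ε : ℝ) : Prop :=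
  f p₁ = p₂ ∧ (∀ a b : Z₁, |dist (f a) (f b) - dist a b| < ε) ∧
    ∀ z : Z₂, ∃ a : Z₁, dist z (f a) ≤ ε

instance coveringGroup_normal (X : Type*) [MetricSpace X] (p : X) (δ : ℝ) :
    (coveringGroup X p δ).Normal :=
  Subgroup.normalClosure_normal

instance cutCoveringGroup_normal (X : Type*) [MetricSpace X] (x : X) (δ R : ℝ) :
    (cutCoveringGroup X x δ R).Normal :=
  Subgroup.normalClosure_normal
/-! ### Auxiliary lemmas -/

section HopfRinow

variable {X : Type*} [MetricSpace X]

/-- In a length space, a point at distance `≤ r + ε` from `x` is within `2ε` of the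
closed ball of radius `r`. -/
lemma length_intermediate (hX : IsLengthSpace X) {x z : X} {r ε : ℝ} (hr : 0 ≤ r)
    (hε : 0 < ε) (hz : dist x z ≤ r + ε) : ∃ y : X, dist x y ≤ r ∧ dist y z ≤ 2 * ε := by
  by_cases h : dist x z ≤ r
  · exact ⟨z, h, by simp; positivity⟩
  push_neg at h
  have hlt : (⨅ γ : Path x z, pathLength γ) < ENNReal.ofReal (dist x z + ε) := by
    rw [← hX x z]
    exact (ENNReal.ofReal_lt_ofReal_iff (by positivity)).mpr (by linarith)
  obtain ⟨γ, hγ⟩ := iInf_lt_iff.mp hlt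
  have hf : Continuous fun t : I => dist x (γ t) := continuous_const.dist γ.continuous
  have hmem : r ∈ Set.Icc (dist x (γ 0)) (dist x (γ 1)) := by
    simp only [γ.source, γ.target, dist_self]
    exact ⟨hr, h.le⟩
  obtain ⟨t, ht⟩ := intermediate_value_univ (0 : I) 1 hf hmem
  have h0t : (0 : I) ≤ t := t.2.1
  have ht1 : t ≤ (1 : I) := t.2.2
  have e1 : edist x (γ t) ≤ eVariationOn γ (Set.univ ∩ Set.Icc 0 t) := by
    have := eVariationOn.edist_le γ
      (show (0 : I) ∈ Set.univ ∩ Set.Icc 0 t from ⟨Set.mem_univ _, le_refl _, h0t⟩)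
      (show t ∈ Set.univ ∩ Set.Icc 0 t from ⟨Set.mem_univ _, h0t, le_refl _⟩)
    rwa [γ.source] at this
  have e2 : edist (γ t) z ≤ eVariationOn γ (Set.univ ∩ Set.Icc t 1) := by
    have := eVariationOn.edist_le γ
      (show t ∈ Set.univ ∩ Set.Icc t 1 from ⟨Set.mem_univ _, le_refl _, ht1⟩)
      (show (1 : I) ∈ Set.univ ∩ Set.Icc t 1 from ⟨Set.mem_univ _, ht1, le_refl _⟩)
    rwa [γ.target] at this
  have esum := eVariationOn.Icc_add_Icc γ h0t ht1 (Set.mem_univ t)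
  have huniv : Set.univ ∩ Set.Icc (0 : I) 1 = Set.univ := by
    refine Set.eq_univ_of_forall fun u => ⟨trivial, u.2.1, u.2.2⟩
  rw [huniv] at esum
  have hxy : dist x (γ t) = r := ht
  have exy : edist x (γ t) = ENNReal.ofReal r := by rw [edist_dist, hxy]
  have big : ENNReal.ofReal r + edist (γ t) z ≤ ENNReal.ofReal r + ENNReal.ofReal (2 * ε) :=
    calc ENNReal.ofReal r + edist (γ t) z = edist x (γ t) + edist (γ t) z := by
          rw [exy]
    _ ≤ eVariationOn γ (Set.univ ∩ Set.Icc 0 t) + eVariationOn γ (Set.univ ∩ Set.Icc t 1) :=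
          add_le_add e1 e2
    _ = pathLength γ := esum
    _ ≤ ENNReal.ofReal (dist x z + ε) := hγ.le
    _ ≤ ENNReal.ofReal (r + 2 * ε) := ENNReal.ofReal_le_ofReal (by linarith)
    _ = ENNReal.ofReal r + ENNReal.ofReal (2 * ε) := ENNReal.ofReal_add hr (by positivity)
  have hle : edist (γ t) z ≤ ENNReal.ofReal (2 * ε) :=
    (ENNReal.add_le_add_iff_left ENNReal.ofReal_ne_top).mp big
  rw [edist_dist] at hle
  exact ⟨γ t, hxy.le, (ENNReal.ofReal_le_ofReal_iff (by positivity)).mp hle⟩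

/-- Uniform local compactness on a compact set. -/
lemma uniform_ball_compact [LocallyCompactSpace X] {K : Set X} (hK : IsCompact K) :
    ∃ ε > 0, ∀ y ∈ K, IsCompact (Metric.closedBall y ε) := by
  choose r hr hcomp using fun y : X => Metric.exists_isCompact_closedBall y
  obtain ⟨t, htK, hcover⟩ := hK.elim_nhds_subcover (fun y => Metric.ball y (r y / 2))
    (fun y _ => Metric.ball_mem_nhds y (by have := hr y; positivity))
  by_cases hne : t.Nonempty
  · refine ⟨t.inf' hne fun y => r y / 2, ?_, ?_⟩
    · exact (Finset.lt_inf'_iff hne).mpr fun y _ => by have := hr y; positivity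
    · intro y hy
      obtain ⟨z, hz, hyz⟩ := Set.mem_iUnion₂.mp (hcover hy)
      refine IsCompact.of_isClosed_subset (hcomp z) Metric.isClosed_closedBall fun w hw => ?_
      have h1 : dist w y ≤ t.inf' hne fun y => r y / 2 := Metric.mem_closedBall.mp hw
      have h2 : t.inf' hne (fun y => r y / 2) ≤ r z / 2 := Finset.inf'_le _ hz
      have h3 : dist y z < r z / 2 := Metric.mem_ball.mp hyz
      exact Metric.mem_closedBall.mpr
        ((dist_triangle w y z).trans (by linarith))
  · refine ⟨1, one_pos, fun y hy => absurd (hcover hy) ?_⟩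
    simp [Finset.not_nonempty_iff_eq_empty.mp hne]

/-- Expansion step: a compact closed ball can be slightly enlarged. -/
lemma compact_ball_expand [LocallyCompactSpace X] (hX : IsLengthSpace X) {x : X} {r : ℝ}
    (hr : 0 ≤ r) (hc : IsCompact (Metric.closedBall x r)) :
    ∃ ε > 0, IsCompact (Metric.closedBall x (r + ε)) := by
  obtain ⟨ε₀, hε₀, hcball⟩ := uniform_ball_compact hc
  obtain ⟨t, htK, hcover⟩ := hc.elim_nhds_subcover (fun y => Metric.ball y (ε₀ / 2))
    (fun y _ => Metric.ball_mem_nhds y (by positivity))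
  refine ⟨ε₀ / 4, by positivity, ?_⟩
  have hsub : Metric.closedBall x (r + ε₀ / 4) ⊆ ⋃ y ∈ t, Metric.closedBall y ε₀ := by
    intro z hz
    obtain ⟨y, hy1, hy2⟩ := length_intermediate hX hr (by positivity : (0:ℝ) < ε₀ / 4)
      (by rw [Metric.mem_closedBall, dist_comm] at hz; exact hz)
    have hyK : y ∈ Metric.closedBall x r := Metric.mem_closedBall.mpr (dist_comm x y ▸ hy1)
    obtain ⟨w, hw, hyw⟩ := Set.mem_iUnion₂.mp (hcover hyK)
    refine Set.mem_iUnion₂.mpr ⟨w, hw, Metric.mem_closedBall.mpr ?_⟩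
    have h3 : dist y w < ε₀ / 2 := Metric.mem_ball.mp hyw
    have h4 : dist z y = dist y z := dist_comm z y
    calc dist z w ≤ dist z y + dist y w := dist_triangle _ _ _
    _ ≤ ε₀ := by rw [h4]; linarith
  have hUc : IsCompact (⋃ y ∈ t, Metric.closedBall y ε₀) :=
    t.finite_toSet.isCompact_biUnion fun y hy => hcball y (htK y hy)
  exact IsCompact.of_isClosed_subset hUc Metric.isClosed_closedBall hsub

/-- Limit step: if all smaller closed balls are compact, so is the closed ball itself. -/
lemma compact_ball_limit [CompleteSpace X] (hX : IsLengthSpace X) {x : X} {r : ℝ}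
    (hr : 0 < r) (h : ∀ r', 0 ≤ r' → r' < r → IsCompact (Metric.closedBall x r')) :
    IsCompact (Metric.closedBall x r) := by
  refine TotallyBounded.isCompact_of_isClosed
    (Metric.totallyBounded_iff.mpr fun ε hε => ?_) Metric.isClosed_closedBall
  set δ := min (ε / 4) (r / 2) with hδdef
  have hδ : 0 < δ := lt_min (by positivity) (by positivity)
  have hδr : δ ≤ r / 2 := min_le_right _ _
  have hδε : δ ≤ ε / 4 := min_le_left _ _
  have h1 : 0 ≤ r - δ := by linarith
  have hcomp := h (r - δ) h1 (by linarith)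
  obtain ⟨s, hsfin, hscover⟩ :=
    Metric.totallyBounded_iff.mp hcomp.totallyBounded (ε / 2) (by positivity)
  refine ⟨s, hsfin, fun z hz => ?_⟩
  have hz' : dist x z ≤ (r - δ) + δ := by
    rw [Metric.mem_closedBall, dist_comm] at hz; linarith
  obtain ⟨y, hy1, hy2⟩ := length_intermediate hX h1 hδ hz'
  have hymem : y ∈ Metric.closedBall x (r - δ) := Metric.mem_closedBall.mpr (dist_comm x y ▸ hy1)
  obtain ⟨w, hws, hyw⟩ := Set.mem_iUnion₂.mp (hscover hymem)
  refine Set.mem_iUnion₂.mpr ⟨w, hws, Metric.mem_ball.mpr ?_⟩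
  have hd : dist y w < ε / 2 := Metric.mem_ball.mp hyw
  have h4 : dist z y = dist y z := dist_comm z y
  calc dist z w ≤ dist z y + dist y w := dist_triangle _ _ _
  _ < ε := by rw [h4]; linarith

/-- Hopf–Rinow: in a complete locally compact length space closed balls are compact. -/
lemma isCompact_closedBall_of_length [CompleteSpace X] [LocallyCompactSpace X]
    (hX : IsLengthSpace X) (x : X) (R : ℝ) : IsCompact (Metric.closedBall x R) := by
  obtain ⟨r₀, hr₀, hc₀⟩ := Metric.exists_isCompact_closedBall x
  by_contra hR'
  have hR0 : 0 ≤ R := by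
    by_contra h
    push_neg at h
    exact hR' (by rw [Metric.closedBall_eq_empty.mpr h]; exact isCompact_empty)
  set T := {r : ℝ | 0 ≤ r ∧ ¬ IsCompact (Metric.closedBall x r)} with hT
  have hTne : T.Nonempty := ⟨R, hR0, hR'⟩
  have hTbdd : BddBelow T := ⟨0, fun r hr => hr.1⟩
  set s := sInf T with hs
  have hs_lb : ∀ r, 0 ≤ r → r < s → IsCompact (Metric.closedBall x r) := by
    intro r h0 hrs
    by_contra hc
    exact absurd (csInf_le hTbdd ⟨h0, hc⟩) (not_le.mpr hrs)
  have hs_pos : r₀ ≤ s := by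
    refine le_csInf hTne fun r hr => ?_
    by_contra hle
    push_neg at hle
    exact hr.2 (IsCompact.of_isClosed_subset hc₀ Metric.isClosed_closedBall
      (Metric.closedBall_subset_closedBall hle.le))
  have hs0 : 0 < s := lt_of_lt_of_le hr₀ hs_pos
  have hscomp : IsCompact (Metric.closedBall x s) :=
    compact_ball_limit hX hs0 fun r' h0 hlt => hs_lb r' h0 hlt
  obtain ⟨ε, hε, hcomp'⟩ := compact_ball_expand hX hs0.le hscomp
  have hgap : s + ε ≤ s := by
    refine hs ▸ le_csInf hTne fun r hr => ?_
    by_contra hle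
    push_neg at hle
    exact hr.2 (IsCompact.of_isClosed_subset hcomp' Metric.isClosed_closedBall
      (Metric.closedBall_subset_closedBall hle.le))
  linarith

end HopfRinow

section ProdShift

variable {X M : Type*} [TopologicalSpace X] [TopologicalSpace M]

/-- The point `x` shifted by `c` in the `ℝ`-direction of the product structure. -/
noncomputable def prShift (e : X ≃ₜ M × ℝ) (x : X) (c : ℝ) : X :=
  e.symm ((e x).1, (e x).2 + c)

/-- The path from `x` to its shift. -/
noncomputable def prPathα (e : X ≃ₜ M × ℝ) (x : X) (c : ℝ) : Path x (prShift e x c) where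
  toFun s := e.symm ((e x).1, (e x).2 + (s : ℝ) * c)
  continuous_toFun := by
    exact e.symm.continuous.comp (continuous_const.prodMk
      (continuous_const.add (continuous_subtype_val.mul continuous_const)))
  source' := by simp
  target' := by simp [prShift]

/-- The loop `γ` shifted by `c` in the `ℝ`-direction. -/
noncomputable def prPathη (e : X ≃ₜ M × ℝ) {x : X} (γ : Path x x) (c : ℝ) :
    Path (prShift e x c) (prShift e x c) where
  toFun t := e.symm ((e (γ t)).1, (e (γ t)).2 + c)
  continuous_toFun := by
    have h : Continuous fun t : I => e (γ t) := e.continuous.comp γ.continuous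
    exact e.symm.continuous.comp ((h.fst).prodMk (h.snd.add continuous_const))
  source' := by simp [prShift]
  target' := by simp [prShift]

@[simp] lemma prPathα_apply (e : X ≃ₜ M × ℝ) (x : X) (c : ℝ) (s : I) :
    prPathα e x c s = e.symm ((e x).1, (e x).2 + (s : ℝ) * c) := rfl

@[simp] lemma prPathη_apply (e : X ≃ₜ M × ℝ) {x : X} (γ : Path x x) (c : ℝ) (t : I) :
    prPathη e γ c t = e.symm ((e (γ t)).1, (e (γ t)).2 + c) := rfl

/-- We can shift a loop out of any compact set. -/
lemma exists_shift_out (e : X ≃ₜ M × ℝ) {a : X} (γ : Path a a) {K : Set X}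
    (hK : IsCompact K) :
    ∃ c : ℝ, ∀ t : I, e.symm ((e (γ t)).1, (e (γ t)).2 + c) ∉ K := by
  obtain ⟨B, hB⟩ : BddAbove (Prod.snd '' (e '' K)) :=
    ((hK.image e.continuous).image continuous_snd).bddAbove
  obtain ⟨m, hm⟩ : BddBelow (Set.range fun t : I => (e (γ t)).2) :=
    (isCompact_range (e.continuous.comp γ.continuous).snd).bddBelow
  refine ⟨B - m + 1, fun t ht => ?_⟩
  have h1 : (e (e.symm ((e (γ t)).1, (e (γ t)).2 + (B - m + 1)))).2 ∈ Prod.snd '' (e '' K) :=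
    Set.mem_image_of_mem _ (Set.mem_image_of_mem _ ht)
  rw [e.apply_symm_apply] at h1
  have h2 : (e (γ t)).2 + (B - m + 1) ≤ B := hB h1
  have h3 : m ≤ (e (γ t)).2 := hm ⟨t, rfl⟩
  linarith

/-- Transfer of based path homotopy through a homeomorphism. -/
lemma homotopic_of_map_homeomorph {X Y : Type*} [TopologicalSpace X] [TopologicalSpace Y]
    (e : X ≃ₜ Y) {a b : X} {p q : Path a b}
    (h : (p.map e.continuous).Homotopic (q.map e.continuous)) : p.Homotopic q := by
  obtain ⟨H⟩ := h
  refine ⟨{ toFun := fun st => e.symm (H st)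
            continuous_toFun := e.symm.continuous.comp H.continuous
            map_zero_left := fun t => ?_
            map_one_left := fun t => ?_
            prop' := fun t s hs => ?_ }⟩
  · have h0 := H.apply_zero t
    simp [h0]
  · have h1 := H.apply_one t
    simp [h1]
  · have hp := H.prop t s hs
    have h2 : H (t, s) = e (p s) := by simpa using hp
    simp [h2]

/-- Two loops in a product `M × ℝ` whose first coordinates are homotopic are homotopic. -/
lemma homotopic_of_fst_homotopic {M : Type*} [TopologicalSpace M] {y : M × ℝ}
    {q₁ q₂ : Path y y}
    (h : (q₁.map (continuous_fst : Continuous (Prod.fst : M × ℝ → M))).Homotopic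
      (q₂.map continuous_fst)) : q₁.Homotopic q₂ := by
  obtain ⟨m0, r0⟩ := y
  have h1 : Path.Homotopic.projLeft (⟦q₁⟧ : Path.Homotopic.Quotient (m0, r0) (m0, r0))
      = Path.Homotopic.projLeft ⟦q₂⟧ := Quotient.sound h
  have h2 : Path.Homotopic.projRight (⟦q₁⟧ : Path.Homotopic.Quotient (m0, r0) (m0, r0))
      = Path.Homotopic.projRight ⟦q₂⟧ := Subsingleton.elim _ _
  have h3 : (⟦q₁⟧ : Path.Homotopic.Quotient (m0, r0) (m0, r0)) = ⟦q₂⟧ := by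
    rw [← Path.Homotopic.prod_projLeft_projRight ⟦q₁⟧,
      ← Path.Homotopic.prod_projLeft_projRight ⟦q₂⟧, h1, h2]
  exact Quotient.exact h3

/-- The key conjugation: a loop is homotopic rel basepoint to `α · (shifted loop) · α⁻¹`. -/
lemma loop_homotopic_conj_shift (e : X ≃ₜ M × ℝ) {x : X} (γ : Path x x) (c : ℝ) :
    γ.Homotopic (((prPathα e x c).trans (prPathη e γ c)).trans (prPathα e x c).symm) := by
  apply homotopic_of_map_homeomorph e
  apply homotopic_of_fst_homotopic
  have key : ((((prPathα e x c).trans (prPathη e γ c)).trans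
        (prPathα e x c).symm).map e.continuous).map continuous_fst
      = ((Path.refl (e x).1).trans ((γ.map e.continuous).map continuous_fst)).trans
        (Path.refl (e x).1).symm := by
    ext t
    simp only [Path.map_coe, Function.comp_apply, Path.trans_apply, Path.refl_symm]
    split_ifs <;>
      simp [Path.symm_apply, Function.comp_apply, e.apply_symm_apply]
  rw [key, Path.refl_symm]
  have h : (((Path.refl (e x).1).trans ((γ.map e.continuous).map continuous_fst)).trans
      (Path.refl (e x).1)).Homotopic ((γ.map e.continuous).map continuous_fst) :=
    ⟨(Path.Homotopy.transRefl _).trans (Path.Homotopy.reflTrans _)⟩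
  exact h.symm

end ProdShift

/-- A complete locally compact length space homeomorphic to `M × ℝ` has
the loops-to-infinity property; consequently its cut-off covering groups are the whole
fundamental group and its `R` cut-off covering spectra are empty. -/
theorem loopsToInfinity_of_homeomorph_prod_real
    {X M : Type*} [MetricSpace X] [CompleteSpace X] [LocallyCompactSpace X]
    [TopologicalSpace M] (hX : IsLengthSpace X) (e : X ≃ₜ M × ℝ) :
    LoopsToInfinity X ∧
    ∀ (x : X) (δ R : ℝ), 0 < δ → 0 < R →
      cutCoveringGroup X x δ R = ⊤ ∧ cutCovSpec X x R = ∅ := by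
  have htop : ∀ (x : X) (δ R : ℝ), 0 < R → cutCoveringGroup X x δ R = ⊤ := by
    intro x δ R hR
    rw [eq_top_iff]
    intro g _
    obtain ⟨γ, hγ⟩ := Quotient.exists_rep (FundamentalGroup.toPath (X := TopCat.of X) g)
    obtain ⟨c, hc⟩ := exists_shift_out e γ (isCompact_closedBall_of_length hX x R)
    have hhom := loop_homotopic_conj_shift e γ c
    have hg : g = loopClass (prPathα e x c) (prPathη e γ c) := by
      have h1 : g = FundamentalGroup.fromPath (X := TopCat.of X)
          (FundamentalGroup.toPath (X := TopCat.of X) g) := rfl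
      rw [h1, ← hγ]
      exact congrArg (FundamentalGroup.fromPath (X := TopCat.of X)) (Quotient.sound hhom)
    refine Subgroup.subset_normalClosure ?_
    exact ⟨prShift e x c, prPathη e γ c, prPathα e x c,
      Or.inr fun t => by simpa using hc t, hg⟩
  have hlti : LoopsToInfinity X := by
    intro a γ K hK
    obtain ⟨c, hc⟩ := exists_shift_out e γ hK
    refine ⟨prShift e a c, prPathη e γ c, fun t => by simpa using hc t, ?_⟩
    refine ⟨⟨fun st => e.symm ((e (γ st.2)).1, (e (γ st.2)).2 + (st.1 : ℝ) * c), ?_⟩,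
      ?_, ?_, ?_⟩
    · have h : Continuous fun st : I × I => e (γ st.2) :=
        e.continuous.comp (γ.continuous.comp continuous_snd)
      exact e.symm.continuous.comp ((h.fst).prodMk
        (h.snd.add ((continuous_subtype_val.comp continuous_fst).mul continuous_const)))
    · intro t; simp
    · intro t; simp
    · intro s; simp
  refine ⟨hlti, fun x δ R hδ hR => ⟨htop x δ R hR, ?_⟩⟩
  ext δ'
  simp only [cutCovSpec, Set.mem_setOf_eq, Set.mem_empty_iff_false, iff_false, not_and]
  intro hδ'pos h
  exact h (δ' + 1) (by linarith) (by rw [htop x (δ' + 1) R hR, htop x δ' R hR])
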